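/- Let X be uniformly distributed on {0, 1, ..., 2^w − 1} and let Y = 1 + ⌊m·X/2^w⌋ for a positive integer m ≤ 2^w. Then Y is uniformly distributed on {1, ..., m} if and only if m divides 2^w. -/

import Mathlib

/-- For `X` uniform on `{0,…,2^w−1}` and `Y = 1 + ⌊m·X/2^w⌋` with `0 < m ≤ 2^w`,
`Y` is uniform on `{1,…,m}` iff `m ∣ 2^w`. -/
theorem stmt10 (w m : ℕ) (hm : 0 < m) (hm2 : m ≤ 2 ^ w) :
    (∀ y₁ ∈ Finset.Icc 1 m, ∀ y₂ ∈ Finset.Icc 1 m,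
      ((Finset.range (2 ^ w)).filter (fun x => 1 + m * x / 2 ^ w = y₁)).card =
      ((Finset.range (2 ^ w)).filter (fun x => 1 + m * x / 2 ^ w = y₂)).card)
    ↔ m ∣ 2 ^ w := by
  have hN : 0 < 2 ^ w := by positivity
  constructor
  · intro h
    have hmem : ∀ x ∈ Finset.range (2 ^ w), 1 + m * x / 2 ^ w ∈ Finset.Icc 1 m := by
      intro x hx
      rw [Finset.mem_range] at hx
      rw [Finset.mem_Icc]
      refine ⟨Nat.le_add_right 1 _, ?_⟩
      have hlt : m * x / 2 ^ w < m := by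
        apply Nat.div_lt_of_lt_mul
        calc m * x < m * 2 ^ w := (Nat.mul_lt_mul_left hm).mpr hx
        _ = 2 ^ w * m := by ring
      omega
    have hsum := Finset.card_eq_sum_card_fiberwise hmem
    rw [Finset.card_range] at hsum
    set c := ((Finset.range (2 ^ w)).filter (fun x => 1 + m * x / 2 ^ w = 1)).card with hc
    have h1 : (1 : ℕ) ∈ Finset.Icc 1 m := by rw [Finset.mem_Icc]; omega
    have hsum2 : ∑ y ∈ Finset.Icc 1 m,
        ((Finset.range (2 ^ w)).filter (fun x => 1 + m * x / 2 ^ w = y)).card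
        = ∑ y ∈ Finset.Icc 1 m, c := by
      apply Finset.sum_congr rfl
      intro y hy
      exact h y hy 1 h1
    rw [hsum2, Finset.sum_const, Nat.card_Icc] at hsum
    simp at hsum
    exact ⟨c, by omega⟩
  · intro ⟨q, hq⟩ y₁ hy₁ y₂ hy₂
    rw [Finset.mem_Icc] at hy₁ hy₂
    have hq0 : 0 < q := by
      rcases Nat.eq_zero_or_pos q with h | h
      · exfalso; rw [h, Nat.mul_zero] at hq; omega
      · exact h
    have key : ∀ y, 1 ≤ y → y ≤ m →
        ((Finset.range (2 ^ w)).filter (fun x => 1 + m * x / 2 ^ w = y)).card = q := by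
      intro y hy1 hy2
      have hset : (Finset.range (2 ^ w)).filter (fun x => 1 + m * x / 2 ^ w = y)
          = Finset.Ico ((y - 1) * q) (y * q) := by
        ext x
        simp only [Finset.mem_filter, Finset.mem_range, Finset.mem_Ico]
        have hdiv : m * x / 2 ^ w = x / q := by
          rw [hq, Nat.mul_div_mul_left _ _ hm]
        rw [hdiv]
        constructor
        · rintro ⟨hx, hxy⟩
          have h1 : x / q = y - 1 := by omega
          constructor
          · rw [← h1]; exact Nat.div_mul_le_self x q
          · have hy' : y = x / q + 1 := by omega
            rw [hy', Nat.mul_comm]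
            exact Nat.lt_mul_div_succ x hq0
        · rintro ⟨h1, h2⟩
          have hx : x < 2 ^ w := by
            calc x < y * q := h2
            _ ≤ m * q := Nat.mul_le_mul_right q hy2
            _ = 2 ^ w := hq.symm
          refine ⟨hx, ?_⟩
          have h3 : x / q = y - 1 := by
            apply Nat.div_eq_of_lt_le h1
            have hy' : y - 1 + 1 = y := by omega
            rw [hy']
            exact h2
          omega
      rw [hset, Nat.card_Ico, ← Nat.sub_mul]
      have : y - (y - 1) = 1 := by omega
      rw [this, one_mul]
    rw [key y₁ hy₁.1 hy₁.2, key y₂ hy₂.1 hy₂.2]
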